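/- arXiv:2003.12370 — 2 statements merged into one kernel-verified Lean document; each statement's English description precedes it below -/
import Mathlib

section
/- Let 0 < s ≤ 1, h ∈ CV_hpl(s) with h(z) = z + d₂z² + d₃z³ + ⋯, and λ ∈ ℝ. Then |d₃ − λd₂²| ≤ −(s²/4)(λ − (3s+1)/(3s)) if λ ≤ (3s−1)/(3s); |d₃ − λd₂²| ≤ s/6 if (3s−1)/(3s) ≤ λ ≤ (s+1)/s; and |d₃ − λd₂²| ≤ (s²/4)(λ − (3s+1)/(3s)) if λ ≥ (s+1)/s. -/
open FormalMultilinearSeries Metric Set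

lemma ofScalars_coeff (c : ℕ → ℂ) (n : ℕ) :
    (FormalMultilinearSeries.ofScalars ℂ c).coeff n = c n := by
  show (FormalMultilinearSeries.ofScalars ℂ c) n (fun _ => 1) = c n
  rw [FormalMultilinearSeries.ofScalars_apply_eq]
  simp

lemma radius_ge_one (c : ℕ → ℂ)
    (h : ∀ z ∈ Metric.ball (0:ℂ) 1, Summable fun n => c n * z ^ n) :
    1 ≤ (FormalMultilinearSeries.ofScalars ℂ c).radius := by
  apply ENNReal.le_of_forall_nnreal_lt
  intro r hr
  rw [ENNReal.coe_lt_one_iff] at hr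
  have hr1 : (r : ℝ) < 1 := hr
  set x : ℝ := ((r : ℝ) + 1) / 2 with hxdef
  have hrx : (r : ℝ) < x := by simp only [hxdef]; linarith
  have hx1 : x < 1 := by simp only [hxdef]; linarith
  have hx0 : 0 < x := by positivity
  have hz : (x : ℂ) ∈ Metric.ball (0:ℂ) 1 := by
    simp [Complex.norm_of_nonneg hx0.le, abs_of_pos hx0, hx1]
  have hs := h _ hz
  have htend : Filter.Tendsto (fun n => ‖c n * (x:ℂ) ^ n‖) Filter.atTop (nhds 0) := by
    simpa using hs.tendsto_atTop_zero.norm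
  obtain ⟨C, hC⟩ := htend.bddAbove_range
  apply (FormalMultilinearSeries.ofScalars ℂ c).le_radius_of_bound C
  intro n
  rw [FormalMultilinearSeries.norm_apply_eq_norm_coef, ofScalars_coeff]
  have h2 : ‖c n‖ * (r:ℝ) ^ n ≤ ‖c n * (x:ℂ) ^ n‖ := by
    rw [norm_mul, norm_pow, Complex.norm_real, Real.norm_eq_abs, abs_of_pos hx0]
    have : (r:ℝ) ^ n ≤ x ^ n := pow_le_pow_left₀ r.coe_nonneg hrx.le n
    exact mul_le_mul_of_nonneg_left this (norm_nonneg _)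
  exact h2.trans (hC ⟨n, rfl⟩)

lemma hasFPSOB (c : ℕ → ℂ)
    (h : ∀ z ∈ Metric.ball (0:ℂ) 1, Summable fun n => c n * z ^ n) :
    HasFPowerSeriesOnBall (fun z => ∑' n, c n * z ^ n)
      (FormalMultilinearSeries.ofScalars ℂ c) 0 1 := by
  set p := FormalMultilinearSeries.ofScalars ℂ c
  have hrad := radius_ge_one c h
  have h1 : HasFPowerSeriesOnBall p.sum p 0 p.radius :=
    p.hasFPowerSeriesOnBall (lt_of_lt_of_le one_pos hrad)
  have h2 := h1.mono one_pos hrad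
  apply h2.congr
  intro z _
  show p.sum z = _
  unfold FormalMultilinearSeries.sum
  exact tsum_congr fun n => by
    rw [FormalMultilinearSeries.ofScalars_apply_eq]; rw [smul_eq_mul]


lemma eball_eq : Metric.eball (0:ℂ) (1:ENNReal) = Metric.ball (0:ℂ) 1 := by
  rw [show ((1:ENNReal)) = ((1:NNReal):ENNReal) by simp, Metric.eball_coe]
  norm_num

set_option maxHeartbeats 1000000 in
lemma schwarz_coeff (w : ℕ → ℂ) (ω : ℂ → ℂ) (hw0 : w 0 = 0)
    (hsum : ∀ z ∈ Metric.ball (0 : ℂ) 1, Summable fun n => w n * z ^ n)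
    (hrep : ∀ z ∈ Metric.ball (0 : ℂ) 1, ω z = ∑' n, w n * z ^ n)
    (hb : ∀ z ∈ Metric.ball (0 : ℂ) 1, ‖ω z‖ < 1) :
    ‖w 1‖ ≤ 1 ∧ ‖w 2‖ ≤ 1 - ‖w 1‖ ^ 2 := by
  -- ω has power series p
  have hpω : HasFPowerSeriesOnBall ω (FormalMultilinearSeries.ofScalars ℂ w) 0 1 := by
    apply (hasFPSOB w hsum).congr
    intro z hz
    exact (hrep z (by rwa [eball_eq] at hz)).symm
  have hdiffω : DifferentiableOn ℂ ω (Metric.ball (0:ℂ) 1) := by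
    have := hpω.differentiableOn
    rwa [eball_eq] at this
  have hω0 : ω 0 = 0 := by
    rw [hrep 0 (by simp), tsum_eq_single 0 (fun n hn => by simp [zero_pow hn]), hw0]
    simp
  have hmaps : MapsTo ω (Metric.ball (0:ℂ) 1) (Metric.ball (0:ℂ) 1) :=
    fun z hz => mem_ball_zero_iff.2 (hb z hz)
  -- |w 1| ≤ 1 via Schwarz derivative bound
  have hw1 : ‖w 1‖ ≤ 1 := by
    have h1 := Complex.norm_deriv_le_one_of_mapsTo_ball hdiffω (by rw [hω0]; exact hmaps.mono_right ball_subset_closedBall) one_pos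
    have h2 : deriv ω 0 = w 1 := by
      rw [hpω.hasFPowerSeriesAt.deriv]
      have := ofScalars_coeff w 1
      rw [FormalMultilinearSeries.coeff] at this
      simpa using this
    rwa [h2] at h1
  refine ⟨hw1, ?_⟩
  -- the shifted series g
  have hsum' : ∀ z ∈ Metric.ball (0 : ℂ) 1, Summable fun n => w (n+1) * z ^ n := by
    intro z hz
    rcases eq_or_ne z 0 with rfl | hz0
    · apply summable_of_ne_finset_zero (s := {0})
      intro n hn
      simp only [Finset.mem_singleton] at hn
      simp [zero_pow hn]
    · have h1 : Summable fun n => w (n+1) * z ^ (n+1) := (summable_nat_add_iff 1).2 (hsum z hz)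
      have := h1.mul_right z⁻¹
      apply this.congr
      intro n
      field_simp
      ring
  set g : ℂ → ℂ := fun z => ∑' n, w (n+1) * z ^ n with hgdef
  have hpg : HasFPowerSeriesOnBall g (FormalMultilinearSeries.ofScalars ℂ (fun n => w (n+1))) 0 1 :=
    hasFPSOB _ hsum'
  have hdiffg : DifferentiableOn ℂ g (Metric.ball (0:ℂ) 1) := by
    have := hpg.differentiableOn
    rwa [eball_eq] at this
  have hg0 : g 0 = w 1 := by
    rw [hgdef]
    simp only
    rw [tsum_eq_single 0 (fun n hn => by simp [zero_pow hn])]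
    simp
  have hgderiv : HasDerivAt g (w 2) 0 := by
    have h1 := hpg.hasFPowerSeriesAt.hasDerivAt
    have h2 := ofScalars_coeff (fun n => w (n+1)) 1
    rw [FormalMultilinearSeries.coeff] at h2
    have h3 : ((FormalMultilinearSeries.ofScalars ℂ (fun n => w (n + 1)) 1) fun _ => 1) = w 2 := h2
    rw [h3] at h1
    exact h1
  -- z * g z = ω z
  have hgω : ∀ z ∈ Metric.ball (0:ℂ) 1, z * g z = ω z := by
    intro z hz
    rw [hgdef]
    simp only
    rw [← tsum_mul_left, hrep z hz, Summable.tsum_eq_zero_add (hsum z hz), hw0]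
    simp only [zero_mul, zero_add]
    exact tsum_congr fun n => by ring
  -- ‖g z‖ ≤ 1 on the ball
  have hgle : ∀ z ∈ Metric.ball (0:ℂ) 1, ‖g z‖ ≤ 1 := by
    intro z hz
    rcases eq_or_ne z 0 with rfl | hz0
    · rwa [hg0]
    · have h1 : ‖ω z‖ ≤ ‖z‖ :=
        Complex.norm_le_norm_of_mapsTo_ball hdiffω (hmaps.mono_right ball_subset_closedBall) hω0 (by simpa [mem_ball_zero_iff] using hz)
      rw [← hgω z hz, norm_mul] at h1
      have hz0' : 0 < ‖z‖ := norm_pos_iff.2 hz0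
      calc ‖g z‖ = ‖g z‖ := rfl
        _ ≤ 1 := by
          nlinarith [h1, hz0']
  rcases eq_or_lt_of_le hw1 with heq | hlt
  · -- |w 1| = 1 : maximum principle forces g constant, so w 2 = 0
    have hmax : IsMaxOn (norm ∘ g) (Metric.ball (0:ℂ) 1) 0 := by
      intro z hz
      simp only [Function.comp_apply, Set.mem_setOf_eq, hg0, heq]
      exact hgle z hz
    have hconst := Complex.eqOn_of_isPreconnected_of_isMaxOn_norm
      ((convex_ball (0:ℂ) 1).isPreconnected) isOpen_ball hdiffg (mem_ball_self one_pos) hmax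
    have hEv : g =ᶠ[nhds (0:ℂ)] (fun _ => g 0) := by
      filter_upwards [isOpen_ball.mem_nhds (mem_ball_self one_pos)] with z hz using hconst hz
    have hw2 : w 2 = 0 := by
      have h1 := hgderiv.deriv
      rw [Filter.EventuallyEq.deriv_eq hEv] at h1
      simpa using h1.symm
    rw [hw2]
    simp [heq]
  · set a := w 1 with hadef
    have hden : ∀ z ∈ Metric.ball (0:ℂ) 1, 1 - (starRingEnd ℂ) a * g z ≠ 0 := by
      intro z hz h0
      have h1 : ‖(starRingEnd ℂ) a * g z‖ ≤ ‖a‖ := by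
        rw [norm_mul, RCLike.norm_conj]
        exact mul_le_of_le_one_right (norm_nonneg _) (hgle z hz)
      have h2 : (1:ℂ) = (starRingEnd ℂ) a * g z := sub_eq_zero.mp h0
      rw [← h2] at h1
      simp only [norm_one] at h1
      exact absurd (lt_of_le_of_lt h1 hlt) (lt_irrefl 1)
    set φ : ℂ → ℂ := fun z => (g z - a) / (1 - (starRingEnd ℂ) a * g z) with hφdef
    have hφdiff : DifferentiableOn ℂ φ (Metric.ball (0:ℂ) 1) :=
      (hdiffg.sub_const a).div
        ((differentiableOn_const 1).sub ((differentiableOn_const _).mul hdiffg)) hden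
    have hφ0 : φ 0 = 0 := by rw [hφdef]; simp [hg0]
    have hφle : ∀ z ∈ Metric.ball (0:ℂ) 1, ‖φ z‖ ≤ 1 := by
      intro z hz
      have hble := hgle z hz
      rw [hφdef]
      simp only [norm_div]
      apply div_le_one_of_le₀ ?_ (norm_nonneg _)
      have key : Complex.normSq (1 - (starRingEnd ℂ) a * g z) - Complex.normSq (g z - a)
          = (1 - Complex.normSq a) * (1 - Complex.normSq (g z)) := by
        simp only [Complex.normSq_apply, Complex.sub_re, Complex.sub_im, Complex.mul_re,
          Complex.mul_im, Complex.one_re, Complex.one_im, Complex.conj_re, Complex.conj_im]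
        ring
      have h1 : Complex.normSq (g z) ≤ 1 := by
        rw [← Complex.sq_norm]
        nlinarith [hble, norm_nonneg (g z)]
      have h2 : Complex.normSq a ≤ 1 := by
        rw [← Complex.sq_norm]
        nlinarith [hlt.le, norm_nonneg a]
      have h3 : Complex.normSq (g z - a) ≤ Complex.normSq (1 - (starRingEnd ℂ) a * g z) := by
        nlinarith
      have h4 := Real.sqrt_le_sqrt h3
      rwa [← Complex.norm_def, ← Complex.norm_def] at h4
    have hderiv_le : ‖deriv φ 0‖ ≤ 1 := by
      apply le_of_forall_pos_le_add
      intro ε hε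
      have hmapsφ : MapsTo φ (Metric.ball (0:ℂ) 1) (Metric.ball (φ 0) (1+ε)) := by
        intro z hz
        rw [hφ0, mem_ball_zero_iff]
        exact lt_of_le_of_lt (hφle z hz) (by linarith)
      have := Complex.norm_deriv_le_div_of_mapsTo_ball hφdiff (hmapsφ.mono_right ball_subset_closedBall) one_pos
      rwa [div_one] at this
    have h00 : (1 - (starRingEnd ℂ) a * a) ≠ 0 := by
      have := hden 0 (mem_ball_self one_pos)
      rwa [hg0] at this
    have hφd : HasDerivAt φ
        ((w 2 * (1 - (starRingEnd ℂ) a * g 0) - (g 0 - a) * (0 - ((starRingEnd ℂ) a * w 2)))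
          / (1 - (starRingEnd ℂ) a * g 0) ^ 2) 0 := by
      have hnum : HasDerivAt (fun z => g z - a) (w 2) 0 := hgderiv.sub_const a
      have hdenD : HasDerivAt (fun z => 1 - (starRingEnd ℂ) a * g z)
          (0 - ((starRingEnd ℂ) a * w 2)) 0 := by
        have h5 := (hgderiv.const_mul ((starRingEnd ℂ) a)).const_sub (1:ℂ)
        simpa using h5
      exact hnum.div hdenD (by rw [hg0]; exact h00)
    have hval : deriv φ 0 = w 2 / (1 - (starRingEnd ℂ) a * a) := by
      rw [hφd.deriv, hg0, sub_self, zero_mul, sub_zero, sq]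
      rw [mul_div_mul_right _ _ h00]
    have hcm : (starRingEnd ℂ) a * a = (Complex.normSq a : ℂ) := by
      rw [mul_comm, Complex.mul_conj]
    have habs : ‖deriv φ 0‖ = ‖w 2‖ / (1 - Complex.normSq a) := by
      rw [hval, norm_div, hcm]
      congr 1
      have h6 : (1:ℂ) - (Complex.normSq a : ℂ) = ((1 - Complex.normSq a : ℝ) : ℂ) := by
        push_cast; ring
      rw [h6, Complex.norm_real, Real.norm_eq_abs, abs_of_pos]
      have h2 : Complex.normSq a < 1 := by
        rw [← Complex.sq_norm]
        nlinarith [hlt, norm_nonneg a]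
      linarith
    rw [habs] at hderiv_le
    have hpos : 0 < 1 - Complex.normSq a := by
      have h2 : Complex.normSq a < 1 := by
        rw [← Complex.sq_norm]
        nlinarith [hlt, norm_nonneg a]
      linarith
    rw [div_le_one hpos] at hderiv_le
    have h7 : Complex.normSq a = ‖w 1‖ ^ 2 := by
      rw [← Complex.sq_norm]
    linarith


set_option maxHeartbeats 1000000 in
/-- the Fekete–Szegő inequalities for `CV_hpl(s)`, stated (as sanctioned by
the context) via a Schwarz function `ω` with coefficients `w` and
`d₂ = s w₁/2`, `d₃ = (s/6)(w₂ + ((3s+1)/2) w₁²)`. -/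
theorem stmt_10 (s lam : ℝ) (hs0 : 0 < s) (hs1 : s ≤ 1)
    (ω : ℂ → ℂ) (w d : ℕ → ℂ) (hw0 : w 0 = 0)
    (hsum : ∀ z ∈ Metric.ball (0 : ℂ) 1, Summable fun n => w n * z ^ n)
    (hrep : ∀ z ∈ Metric.ball (0 : ℂ) 1, ω z = ∑' n, w n * z ^ n)
    (hb : ∀ z ∈ Metric.ball (0 : ℂ) 1, ‖ω z‖ < 1)
    (hd2 : d 2 = (s : ℂ) * w 1 / 2)
    (hd3 : d 3 = ((s : ℂ) / 6) * (w 2 + ((3 * (s : ℂ) + 1) / 2) * w 1 ^ 2)) :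
    (lam ≤ (3 * s - 1) / (3 * s) →
      ‖d 3 - (lam : ℂ) * d 2 ^ 2‖ ≤ -((s ^ 2 / 4) * (lam - (3 * s + 1) / (3 * s)))) ∧
    ((3 * s - 1) / (3 * s) ≤ lam ∧ lam ≤ (s + 1) / s →
      ‖d 3 - (lam : ℂ) * d 2 ^ 2‖ ≤ s / 6) ∧
    ((s + 1) / s ≤ lam →
      ‖d 3 - (lam : ℂ) * d 2 ^ 2‖ ≤ (s ^ 2 / 4) * (lam - (3 * s + 1) / (3 * s))) := by
  obtain ⟨hA, hB⟩ := schwarz_coeff w ω hw0 hsum hrep hb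
  set t : ℝ := (3 * s + 1) / 2 - 3 * lam * s / 2 with ht
  have hrepr : d 3 - (lam : ℂ) * d 2 ^ 2 = ((s / 6 : ℝ) : ℂ) * (w 2 + ((t : ℝ) : ℂ) * w 1 ^ 2) := by
    rw [hd2, hd3, ht]
    push_cast
    ring
  have hA0 : (0:ℝ) ≤ ‖w 1‖ ^ 2 := sq_nonneg _
  have hA1 : ‖w 1‖ ^ 2 ≤ 1 := by nlinarith [norm_nonneg (w 1)]
  have hkey : ‖d 3 - (lam : ℂ) * d 2 ^ 2‖ ≤ s / 6 * (1 + (|t| - 1) * ‖w 1‖ ^ 2) := by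
    rw [hrepr, norm_mul]
    have h1 : ‖((s / 6 : ℝ) : ℂ)‖ = s / 6 := by
      rw [Complex.norm_real, Real.norm_eq_abs, abs_of_pos (by positivity)]
    rw [h1]
    have h2 : ‖w 2 + ((t : ℝ) : ℂ) * w 1 ^ 2‖ ≤ ‖w 2‖ + |t| * ‖w 1‖ ^ 2 := by
      refine (norm_add_le _ _).trans ?_
      rw [norm_mul, norm_pow, Complex.norm_real, Real.norm_eq_abs]
    have h3 : ‖w 2‖ + |t| * ‖w 1‖ ^ 2 ≤ 1 + (|t| - 1) * ‖w 1‖ ^ 2 := by nlinarith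
    have h4 : (0:ℝ) ≤ s / 6 := by positivity
    nlinarith [norm_nonneg (w 2 + ((t : ℝ) : ℂ) * w 1 ^ 2)]
  have h3s : (0:ℝ) < 3 * s := by linarith
  refine ⟨?_, ?_, ?_⟩
  · intro hlam
    have h5 : lam * (3 * s) ≤ 3 * s - 1 := (le_div_iff₀ h3s).mp hlam
    have ht1 : 1 ≤ t := by rw [ht]; nlinarith
    have habs : |t| = t := abs_of_pos (by linarith)
    have hrhs : -((s ^ 2 / 4) * (lam - (3 * s + 1) / (3 * s))) = s / 6 * t := by
      rw [ht]
      field_simp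
      ring
    rw [hrhs]
    refine hkey.trans ?_
    rw [habs]
    nlinarith [mul_nonneg (mul_nonneg (by linarith : (0:ℝ) ≤ s / 6)
      (by linarith : (0:ℝ) ≤ t - 1)) (by linarith : (0:ℝ) ≤ 1 - ‖w 1‖ ^ 2)]
  · rintro ⟨hlam1, hlam2⟩
    have h5 : 3 * s - 1 ≤ lam * (3 * s) := (div_le_iff₀ h3s).mp hlam1
    have h6 : lam * s ≤ s + 1 := (le_div_iff₀ hs0).mp hlam2
    have ht1 : t ≤ 1 := by rw [ht]; nlinarith
    have ht2 : -1 ≤ t := by rw [ht]; nlinarith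
    have habs : |t| ≤ 1 := abs_le.mpr ⟨ht2, ht1⟩
    refine hkey.trans ?_
    have h7 : 1 + (|t| - 1) * ‖w 1‖ ^ 2 ≤ 1 := by nlinarith
    calc s / 6 * (1 + (|t| - 1) * ‖w 1‖ ^ 2) ≤ s / 6 * 1 :=
          mul_le_mul_of_nonneg_left h7 (by positivity)
      _ = s / 6 := mul_one _
  · intro hlam
    have h6 : s + 1 ≤ lam * s := (div_le_iff₀ hs0).mp hlam
    have ht1 : t ≤ -1 := by rw [ht]; nlinarith
    have habs : |t| = -t := abs_of_neg (by linarith)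
    have hrhs : (s ^ 2 / 4) * (lam - (3 * s + 1) / (3 * s)) = s / 6 * (-t) := by
      rw [ht]
      field_simp
      ring
    rw [hrhs]
    refine hkey.trans ?_
    rw [habs]
    nlinarith [mul_nonneg (mul_nonneg (by linarith : (0:ℝ) ≤ s / 6)
      (by linarith : (0:ℝ) ≤ -t - 1)) (by linarith : (0:ℝ) ≤ 1 - ‖w 1‖ ^ 2)]
end

section
/- Let 0 < s ≤ 1 and f ∈ ST_hpl(s) with inverse f^{-1}(w) = w + ∑_{n≥2} A_n w^n near 0, and λ ∈ ℝ. Then |A₃ − λA₂²| ≤ s²((5s−1)/(4s) − λ) if λ ≤ (5s−3)/(4s); ≤ s/2 if (5s−3)/(4s) ≤ λ ≤ (5s+1)/(4s); and ≤ s²(λ − (5s−1)/(4s)) if λ ≥ (5s+1)/(4s). -/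
set_option maxHeartbeats 1000000
open Metric Set Filter Complex FormalMultilinearSeries
open scoped ENNReal NNReal Topology

theorem schwarz_coeff_bounds (ω : ℂ → ℂ) (w : ℕ → ℂ) (hw0 : w 0 = 0)
    (hsum : ∀ z ∈ Metric.ball (0 : ℂ) 1, Summable fun n => w n * z ^ n)
    (hrep : ∀ z ∈ Metric.ball (0 : ℂ) 1, ω z = ∑' n, w n * z ^ n)
    (hb : ∀ z ∈ Metric.ball (0 : ℂ) 1, ‖ω z‖ < 1) :
    ‖w 1‖ ≤ 1 ∧ ‖w 2‖ ≤ 1 - ‖w 1‖ ^ 2 := by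
  set q : FormalMultilinearSeries ℂ ℂ ℂ := ofScalars ℂ (fun n => w (n + 1)) with hq
  have hnorm : ∀ n, ‖q n‖ = ‖w (n + 1)‖ := fun n => ofScalars_norm ℂ _ n
  have hball_eq : Metric.eball (0 : ℂ) 1 = Metric.ball (0 : ℂ) 1 := by
    simpa using Metric.emetric_ball_nnreal (x := (0 : ℂ)) (ε := 1)
  -- radius of q is at least 1
  have hrad : 1 ≤ q.radius := by
    refine ENNReal.le_of_forall_nnreal_lt fun r hr => ?_
    rcases eq_or_ne r 0 with rfl | hr0
    · exact zero_le
    have hr1 : (r : ℝ) < 1 := by exact_mod_cast hr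
    have hrpos : (0 : ℝ) < r := lt_of_le_of_ne r.coe_nonneg (by exact_mod_cast (Ne.symm hr0))
    have hz : ((r : ℝ) : ℂ) ∈ Metric.ball (0 : ℂ) 1 := by
      simp [Complex.norm_of_nonneg hrpos.le, hr1]
    have hs : Summable fun n => ‖w n‖ * (r : ℝ) ^ n := by
      have := (hsum _ hz)
      rw [← summable_norm_iff] at this
      simpa [Complex.norm_of_nonneg hrpos.le, norm_mul, norm_pow] using this
    have hs' : Summable fun n => ‖w (n + 1)‖ * (r : ℝ) ^ n := by
      have h1 : Summable fun n => ‖w (n + 1)‖ * (r : ℝ) ^ (n + 1) :=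
        (summable_nat_add_iff 1).2 hs
      have h2 := h1.mul_left ((r : ℝ)⁻¹)
      refine h2.congr fun n => ?_
      field_simp
      ring
    exact q.le_radius_of_summable (hs'.congr fun n => by rw [hnorm])
  have hradpos : (0 : ℝ≥0∞) < q.radius := lt_of_lt_of_le (by norm_num) hrad
  set g : ℂ → ℂ := q.sum with hg
  have hgball : HasFPowerSeriesOnBall g q 0 1 :=
    (q.hasFPowerSeriesOnBall hradpos).mono (by norm_num) hrad
  have hgat : HasFPowerSeriesAt g q 0 := hgball.hasFPowerSeriesAt
  have happ : ∀ (n : ℕ) (x : ℂ), q n (fun _ => x) = w (n + 1) * x ^ n := by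
    intro n x
    rw [hq, ofScalars_apply_eq, smul_eq_mul]
  have hg0 : g 0 = w 1 := by
    have h := hgat.coeff_zero (fun _ => 0)
    rw [← h, happ]
    norm_num
  have hderiv : deriv g 0 = w 2 := by
    rw [hgat.deriv]
    have h := happ 1 1
    norm_num at h
    exact h
  have hdiffOn : DifferentiableOn ℂ g (Metric.ball (0 : ℂ) 1) := by
    have := hgball.differentiableOn
    rwa [hball_eq] at this
  have hgsum : ∀ z : ℂ, g z = ∑' n, w (n + 1) * z ^ n := by
    intro z
    rw [hg, FormalMultilinearSeries.sum]
    exact tsum_congr fun n => happ n z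
  -- z * g z = ω z
  have hgω : ∀ z ∈ Metric.ball (0 : ℂ) 1, z * g z = ω z := by
    intro z hz
    rw [hgsum z, hrep z hz]
    rw [Summable.tsum_eq_zero_add (hsum z hz), hw0, zero_mul, zero_add, ← tsum_mul_left]
    exact tsum_congr fun n => by ring
  -- ‖g z‖ ≤ 1 on the ball
  have hg1 : ∀ z ∈ Metric.ball (0 : ℂ) 1, ‖g z‖ ≤ 1 := by
    intro z hz
    rw [mem_ball_zero_iff] at hz
    have key : ∀ᶠ r in 𝓝[<] (1 : ℝ), ‖g z‖ ≤ 1 / r := by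
      filter_upwards [Ioo_mem_nhdsLT_of_mem ⟨hz, le_rfl⟩] with r hr
      have hr0 : 0 < r := (norm_nonneg z).trans_lt hr.1
      have hdc : DiffContOnCl ℂ g (ball (0 : ℂ) r) := by
        refine DifferentiableOn.diffContOnCl ?_
        rw [closure_ball (0 : ℂ) hr0.ne']
        exact hdiffOn.mono fun x hx => by
          rw [mem_closedBall_zero_iff] at hx
          exact mem_ball_zero_iff.2 (lt_of_le_of_lt hx hr.2)
      refine norm_le_of_forall_mem_frontier_norm_le isBounded_ball hdc ?_ ?_
      · rw [frontier_ball (0 : ℂ) hr0.ne']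
        intro ζ hζ
        rw [mem_sphere_zero_iff_norm] at hζ
        have hζball : ζ ∈ Metric.ball (0 : ℂ) 1 := mem_ball_zero_iff.2 (hζ ▸ hr.2)
        have hζ0 : ζ ≠ 0 := by
          intro h; rw [h, norm_zero] at hζ; exact hr0.ne hζ
        have : ‖ζ * g ζ‖ < 1 := by rw [hgω ζ hζball]; exact hb ζ hζball
        rw [norm_mul, hζ] at this
        rw [le_div_iff₀ hr0]
        linarith [mul_comm r ‖g ζ‖]
      · rw [closure_ball (0 : ℂ) hr0.ne', mem_closedBall_zero_iff]
        exact hr.1.le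
    have htend : Tendsto (fun r : ℝ => 1 / r) (𝓝[<] (1 : ℝ)) (𝓝 1) := by
      have : Tendsto (fun r : ℝ => 1 / r) (𝓝 (1 : ℝ)) (𝓝 (1 / 1)) :=
        (tendsto_const_nhds.div tendsto_id one_ne_zero)
      simpa using this.mono_left nhdsWithin_le_nhds
    exact ge_of_tendsto htend key
  have h0mem : (0 : ℂ) ∈ Metric.ball (0 : ℂ) 1 := by simp
  have hw1le : ‖w 1‖ ≤ 1 := by rw [← hg0]; exact hg1 0 h0mem
  refine ⟨hw1le, ?_⟩
  by_cases hcon : ∃ z₀ ∈ Metric.ball (0 : ℂ) 1, ‖g z₀‖ = 1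
  · -- g is constant, of modulus 1, so w 2 = 0 and ‖w 1‖ = 1
    obtain ⟨z₀, hz₀, hgz₀⟩ := hcon
    have hmax : IsMaxOn (norm ∘ g) (Metric.ball (0 : ℂ) 1) z₀ := by
      intro x hx
      simp only [Function.comp_apply, mem_setOf_eq, hgz₀]
      exact hg1 x hx
    have heq : EqOn g (Function.const ℂ (g z₀)) (Metric.ball (0 : ℂ) 1) := fun x hx =>
      eqOn_of_isPreconnected_of_isMaxOn_norm (convex_ball (0 : ℂ) 1).isPreconnected
        isOpen_ball hdiffOn hz₀ hmax hx
    have hw1 : ‖w 1‖ = 1 := by rw [← hg0, heq h0mem]; exact hgz₀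
    have hd0 : deriv g 0 = 0 := by
      have hev : g =ᶠ[𝓝 (0 : ℂ)] Function.const ℂ (g z₀) :=
        Filter.eventuallyEq_of_mem (isOpen_ball.mem_nhds h0mem) heq
      rw [hev.deriv_eq]
      exact deriv_const 0 (g z₀)
    rw [← hderiv, hd0, hw1]
    norm_num
  · push_neg at hcon
    have hglt : ∀ z ∈ Metric.ball (0 : ℂ) 1, ‖g z‖ < 1 := fun z hz =>
      lt_of_le_of_ne (hg1 z hz) (hcon z hz)
    set c : ℂ := w 1 with hc
    have hclt : ‖c‖ < 1 := by rw [← hg0]; exact hglt 0 h0mem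
    set φ : ℂ → ℂ := fun z => (g z - c) / (1 - (starRingEnd ℂ) c * g z) with hφ
    have hden : ∀ z ∈ Metric.ball (0 : ℂ) 1, 1 - (starRingEnd ℂ) c * g z ≠ 0 := by
      intro z hz h
      have h1 : ‖(starRingEnd ℂ) c * g z‖ < 1 := by
        rw [norm_mul, RCLike.norm_conj]
        calc ‖c‖ * ‖g z‖ ≤ ‖c‖ * 1 := by
              exact mul_le_mul_of_nonneg_left (hg1 z hz) (norm_nonneg c)
          _ < 1 := by rwa [mul_one]
      have : (1 : ℂ) = (starRingEnd ℂ) c * g z := by linear_combination h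
      rw [← this] at h1
      simp at h1
    have hkey : ∀ a : ℂ, ‖a‖ < 1 →
        ‖a - c‖ ^ 2 + (1 - ‖a‖ ^ 2) * (1 - ‖c‖ ^ 2) = ‖1 - (starRingEnd ℂ) c * a‖ ^ 2 := by
      intro a ha
      have h1 : ((a - c) * (starRingEnd ℂ) (a - c)
          + (1 - a * (starRingEnd ℂ) a) * (1 - c * (starRingEnd ℂ) c))
          = (1 - (starRingEnd ℂ) c * a) * (starRingEnd ℂ) (1 - (starRingEnd ℂ) c * a) := by
        simp only [map_sub, map_mul, map_one, Complex.conj_conj]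
        ring
      have e1 : ∀ x : ℂ, x * (starRingEnd ℂ) x = ((‖x‖ ^ 2 : ℝ) : ℂ) := by
        intro x
        rw [Complex.mul_conj]
        norm_cast
        rw [Complex.normSq_eq_norm_sq]
      simp only [e1] at h1
      exact_mod_cast h1
    have hmaps : MapsTo φ (Metric.ball (0 : ℂ) 1) (Metric.ball (0 : ℂ) 1) := by
      intro z hz
      rw [mem_ball_zero_iff, hφ]
      have hglt' := hglt z hz
      have hden' := hden z hz
      have hk := hkey (g z) hglt'
      have hpos : (1 - ‖g z‖ ^ 2) * (1 - ‖c‖ ^ 2) > 0 := by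
        apply mul_pos <;> nlinarith [norm_nonneg (g z), norm_nonneg c]
      have hlt : ‖g z - c‖ ^ 2 < ‖1 - (starRingEnd ℂ) c * g z‖ ^ 2 := by linarith
      have hlt' : ‖g z - c‖ < ‖1 - (starRingEnd ℂ) c * g z‖ := by
        nlinarith [norm_nonneg (g z - c), norm_nonneg (1 - (starRingEnd ℂ) c * g z)]
      rw [norm_div, div_lt_one (lt_of_le_of_lt (norm_nonneg _) hlt')]
      exact hlt'
    have hφdiff : DifferentiableOn ℂ φ (Metric.ball (0 : ℂ) 1) := by
      apply DifferentiableOn.div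
      · exact hdiffOn.sub (differentiableOn_const c)
      · exact (differentiableOn_const 1).sub ((differentiableOn_const _).mul hdiffOn)
      · exact hden
    have hφ0 : φ 0 = 0 := by
      rw [hφ]
      simp [hg0, hc]
    have hsch : ‖deriv φ 0‖ ≤ 1 :=
      Complex.norm_deriv_le_one_of_mapsTo_ball hφdiff
        (by rw [hφ0]; exact hmaps.mono_right ball_subset_closedBall) one_pos
    -- compute deriv φ 0
    have hgd : DifferentiableAt ℂ g 0 := hgat.differentiableAt
    have hdφ : deriv φ 0 = w 2 / (1 - ((‖c‖ : ℝ) : ℂ) ^ 2) := by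
      rw [hφ]
      rw [deriv_fun_div (d := fun z => 1 - (starRingEnd ℂ) c * g z) (hgd.sub_const c) ((differentiableAt_const (1:ℂ)).sub
        ((differentiableAt_const _).mul hgd)) (by simpa using hden 0 h0mem)]
      rw [deriv_sub_const, deriv_const_sub, deriv_const_mul _ hgd, hderiv]
      have hcc : (starRingEnd ℂ) c * c = ((‖c‖ : ℝ) : ℂ) ^ 2 := by
        rw [mul_comm, Complex.mul_conj]
        norm_cast
        rw [Complex.normSq_eq_norm_sq]
      have hne : (1 : ℂ) - ((‖c‖ : ℝ) : ℂ) ^ 2 ≠ 0 := by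
        intro h
        have : ((1 - ‖c‖ ^ 2 : ℝ) : ℂ) = 0 := by push_cast; linear_combination h
        rw [Complex.ofReal_eq_zero] at this
        nlinarith [norm_nonneg c]
      rw [hg0, hcc]
      rw [div_eq_div_iff (pow_ne_zero 2 hne) hne]
      ring
    have hden0 : (0 : ℝ) < 1 - ‖c‖ ^ 2 := by nlinarith [norm_nonneg c]
    rw [hdφ] at hsch
    have : ‖w 2 / (1 - ((‖c‖ : ℝ) : ℂ) ^ 2)‖ = ‖w 2‖ / (1 - ‖c‖ ^ 2) := by
      rw [norm_div]
      congr 1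
      have : ((1 : ℂ) - ((‖c‖ : ℝ) : ℂ) ^ 2) = (((1 - ‖c‖ ^ 2 : ℝ)) : ℂ) := by push_cast; ring
      rw [this, Complex.norm_real, Real.norm_eq_abs, abs_of_pos hden0]
    rw [this, div_le_one hden0] at hsch
    exact hsch

/-- Fekete–Szegő inequalities for inverse coefficients in `ST_hpl(s)`,
stated (as sanctioned by the context) via a Schwarz function `ω` with coefficients `w`,
`a₂ = s w₁`, `a₃ = (s/2)(w₂ + ((3s+1)/2)w₁²)`, `A₂ = -a₂`, `A₃ = 2a₂² - a₃`. -/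
theorem stmt_15 (s lam : ℝ) (hs0 : 0 < s) (hs1 : s ≤ 1)
    (ω : ℂ → ℂ) (w a A : ℕ → ℂ) (hw0 : w 0 = 0)
    (hsum : ∀ z ∈ Metric.ball (0 : ℂ) 1, Summable fun n => w n * z ^ n)
    (hrep : ∀ z ∈ Metric.ball (0 : ℂ) 1, ω z = ∑' n, w n * z ^ n)
    (hb : ∀ z ∈ Metric.ball (0 : ℂ) 1, ‖ω z‖ < 1)
    (ha2 : a 2 = (s : ℂ) * w 1)
    (ha3 : a 3 = ((s : ℂ) / 2) * (w 2 + ((3 * (s : ℂ) + 1) / 2) * w 1 ^ 2))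
    (hA2 : A 2 = -a 2) (hA3 : A 3 = 2 * a 2 ^ 2 - a 3) :
    (lam ≤ (5 * s - 3) / (4 * s) →
      ‖A 3 - (lam : ℂ) * A 2 ^ 2‖ ≤ s ^ 2 * ((5 * s - 1) / (4 * s) - lam)) ∧
    ((5 * s - 3) / (4 * s) ≤ lam ∧ lam ≤ (5 * s + 1) / (4 * s) →
      ‖A 3 - (lam : ℂ) * A 2 ^ 2‖ ≤ s / 2) ∧
    ((5 * s + 1) / (4 * s) ≤ lam →
      ‖A 3 - (lam : ℂ) * A 2 ^ 2‖ ≤ s ^ 2 * (lam - (5 * s - 1) / (4 * s))) := by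
  obtain ⟨hw1, hw2⟩ := schwarz_coeff_bounds ω w hw0 hsum hrep hb
  set t : ℝ := (5 * s - 1 - 4 * s * lam) / 2 with ht
  have h4s : (0 : ℝ) < 4 * s := by linarith
  have hx2 : ‖w 1‖ ^ 2 ≤ 1 := by nlinarith [norm_nonneg (w 1)]
  have hFS : ‖w 2 - (t : ℂ) * w 1 ^ 2‖ ≤ max 1 |t| := by
    have h1 : ‖w 2 - (t : ℂ) * w 1 ^ 2‖ ≤ ‖w 2‖ + |t| * ‖w 1‖ ^ 2 := by
      calc ‖w 2 - (t : ℂ) * w 1 ^ 2‖ ≤ ‖w 2‖ + ‖(t : ℂ) * w 1 ^ 2‖ := norm_sub_le _ _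
        _ = ‖w 2‖ + |t| * ‖w 1‖ ^ 2 := by
            rw [norm_mul, norm_pow, Complex.norm_real, Real.norm_eq_abs]
    rcases le_total |t| 1 with h | h
    · refine h1.trans (le_trans ?_ (le_max_left _ _))
      nlinarith [abs_nonneg t, sq_nonneg ‖w 1‖]
    · refine h1.trans (le_trans ?_ (le_max_right _ _))
      nlinarith
  have hid : A 3 - (lam : ℂ) * A 2 ^ 2 = -((s : ℂ) / 2) * (w 2 - (t : ℂ) * w 1 ^ 2) := by
    rw [hA3, hA2, ha2, ha3, ht]
    push_cast
    ring
  have hnormid : ‖A 3 - (lam : ℂ) * A 2 ^ 2‖ = s / 2 * ‖w 2 - (t : ℂ) * w 1 ^ 2‖ := by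
    rw [hid, norm_mul, norm_neg, norm_div, Complex.norm_real, Real.norm_eq_abs,
      abs_of_pos hs0, Complex.norm_ofNat]
  have hmain : ‖A 3 - (lam : ℂ) * A 2 ^ 2‖ ≤ s / 2 * max 1 |t| := by
    rw [hnormid]
    exact mul_le_mul_of_nonneg_left hFS (by positivity)
  refine ⟨?_, ?_, ?_⟩
  · intro h
    have hl : lam * (4 * s) ≤ 5 * s - 3 := (le_div_iff₀ h4s).mp h
    have ht1 : 1 ≤ t := by rw [ht]; nlinarith
    have hmax : max 1 |t| = t := by
      rw [_root_.abs_of_nonneg (by linarith), max_eq_right ht1]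
    refine hmain.trans ?_
    rw [hmax, ht]
    rw [show s ^ 2 * ((5 * s - 1) / (4 * s) - lam) = s / 2 * ((5 * s - 1 - 4 * s * lam) / 2) by
      field_simp; ring]
  · rintro ⟨h1, h2⟩
    have hl1 : 5 * s - 3 ≤ lam * (4 * s) := (div_le_iff₀ h4s).mp h1
    have hl2 : lam * (4 * s) ≤ 5 * s + 1 := (le_div_iff₀ h4s).mp h2
    have habs : |t| ≤ 1 := by
      rw [ht, abs_le]
      constructor <;> nlinarith
    have hmax : max 1 |t| = 1 := max_eq_left habs
    refine hmain.trans ?_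
    rw [hmax, mul_one]
  · intro h
    have hl : 5 * s + 1 ≤ lam * (4 * s) := (div_le_iff₀ h4s).mp h
    have ht1 : t ≤ -1 := by rw [ht]; nlinarith
    have hmax : max 1 |t| = -t := by
      rw [_root_.abs_of_nonpos (by linarith), max_eq_right (by linarith)]
    refine hmain.trans ?_
    rw [hmax, ht]
    rw [show s ^ 2 * (lam - (5 * s - 1) / (4 * s)) = s / 2 * -((5 * s - 1 - 4 * s * lam) / 2) by
      field_simp; ring]
end
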